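/- If F_1(z) := ∫_{a_0}^z f_1(w) dw for a fixed a_0 ∈ ℂ, then for n ≥ 2, C_a^b(f_1, f_2, ..., f_n) = C_a^b(F_1·f_2, f_3, ..., f_n) − F_1(a)·C_a^b(f_2, ..., f_n). -/

import Mathlib

noncomputable section

/-- The integral of `f` along the straight-line path from `a` to `b` in `ℂ`. -/
noncomputable def lineIntegral (a b : ℂ) (f : ℂ → ℂ) : ℂ :=
  ∫ t in (0:ℝ)..1, (b - a) * f (a + (t : ℂ) * (b - a))

/-- Auxiliary iterated integral: the head of the list is the *outermost* integrand. -/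
noncomputable def iterCAux (a : ℂ) : List (ℂ → ℂ) → ℂ → ℂ
  | [], _ => 1
  | f :: fs, b =>
      ∫ t in (0:ℝ)..1,
        (b - a) * (f (a + (t : ℂ) * (b - a)) * iterCAux a fs (a + (t : ℂ) * (b - a)))

/-- `iterC a b [f₁, …, fₙ]` is the iterated integral
`C_a^b(f₁,…,fₙ) = ∫_a^b fₙ(zₙ) ∫_a^{zₙ} f_{n-1}(z_{n-1}) ⋯ ∫_a^{z₂} f₁(z₁) dz₁ ⋯ dzₙ`,
with all integration along straight-line paths. -/
noncomputable def iterC (a b : ℂ) (l : List (ℂ → ℂ)) : ℂ := iterCAux a l.reverse b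

open intervalIntegral MeasureTheory Metric Set

lemma aux_line_cont (a b : ℂ) : Continuous fun t : ℝ => a + (t : ℂ) * (b - a) := by
  fun_prop

lemma iterCAux_continuous {a : ℂ} {L : List (ℂ → ℂ)} (hL : ∀ f ∈ L, Continuous f) :
    Continuous (iterCAux a L) := by
  induction L with
  | nil => simpa [iterCAux] using continuous_const
  | cons f fs ih =>
    have hf : Continuous f := hL f (by simp)
    have ihc : Continuous (iterCAux a fs) := ih fun g hg => hL g (by simp [hg])
    have hφ : Continuous fun p : ℂ × ℝ => a + (p.2 : ℂ) * (p.1 - a) := by fun_prop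
    have hjoint : Continuous (Function.uncurry fun (b : ℂ) (t : ℝ) =>
        (b - a) * (f (a + (t : ℂ) * (b - a)) * iterCAux a fs (a + (t : ℂ) * (b - a)))) :=
      (continuous_fst.sub continuous_const).mul ((hf.comp hφ).mul (ihc.comp hφ))
    have hcont := intervalIntegral.continuous_parametric_intervalIntegral_of_continuous'
      (μ := volume) hjoint 0 1
    have heq : (fun b : ℂ => ∫ t in (0:ℝ)..1,
        (b - a) * (f (a + (t : ℂ) * (b - a)) * iterCAux a fs (a + (t : ℂ) * (b - a)))) =
        iterCAux a (f :: fs) := by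
      funext b; simp [iterCAux]
    rw [← heq]
    exact hcont

lemma deriv_differentiable {f : ℂ → ℂ} (hf : Differentiable ℂ f) :
    Differentiable ℂ (deriv f) :=
  (Complex.analyticOnNhd_univ_iff_differentiable).1
    ((Complex.analyticOnNhd_univ_iff_differentiable).2 hf).deriv

lemma hasDerivAt_lineIntegral {f : ℂ → ℂ} (hf : Differentiable ℂ f) (a₀ z₀ : ℂ) :
    HasDerivAt (fun z => lineIntegral a₀ z f) (f z₀) z₀ := by
  have hcf : Continuous f := hf.continuous
  have hcf' : Continuous (deriv f) := (deriv_differentiable hf).continuous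
  set F' : ℂ → ℝ → ℂ := fun z t =>
    f (a₀ + (t : ℂ) * (z - a₀)) + (z - a₀) * ((t : ℂ) * deriv f (a₀ + (t : ℂ) * (z - a₀)))
    with hF'def
  set K : Set ℂ := (fun p : ℝ × ℂ => a₀ + (p.1 : ℂ) * (p.2 - a₀)) ''
      (Icc (0:ℝ) 1 ×ˢ closedBall z₀ 1) with hKdef
  have hK : IsCompact K :=
    ((isCompact_Icc).prod (isCompact_closedBall z₀ 1)).image (by fun_prop)
  obtain ⟨C₁, hC₁⟩ := hK.exists_bound_of_continuousOn hcf.continuousOn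
  obtain ⟨C₂, hC₂⟩ := hK.exists_bound_of_continuousOn hcf'.continuousOn
  have hmemK : ∀ t ∈ Set.uIoc (0:ℝ) 1, ∀ x ∈ ball z₀ 1,
      a₀ + (t : ℂ) * (x - a₀) ∈ K := by
    intro t ht x hx
    rw [Set.uIoc_of_le zero_le_one] at ht
    exact ⟨(t, x), ⟨⟨ht.1.le, ht.2⟩, ball_subset_closedBall hx⟩, rfl⟩
  have h1mem : (1:ℝ) ∈ Set.uIoc (0:ℝ) 1 := by
    rw [Set.uIoc_of_le zero_le_one]; constructor <;> norm_num
  have hC₁0 : 0 ≤ C₁ :=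
    le_trans (norm_nonneg _) (hC₁ _ (hmemK 1 h1mem z₀ (mem_ball_self one_pos)))
  have hC₂0 : 0 ≤ C₂ :=
    le_trans (norm_nonneg _) (hC₂ _ (hmemK 1 h1mem z₀ (mem_ball_self one_pos)))
  have hdiff : ∀ t ∈ Set.uIoc (0:ℝ) 1, ∀ x ∈ ball z₀ 1,
      HasDerivAt (fun z => (z - a₀) * f (a₀ + (t : ℂ) * (z - a₀))) (F' x t) x := by
    intro t _ x _
    have h1 : HasDerivAt (fun z : ℂ => z - a₀) 1 x := (hasDerivAt_id x).sub_const a₀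
    have hi : HasDerivAt (fun z : ℂ => a₀ + (t : ℂ) * (z - a₀)) ((t : ℂ)) x := by
      simpa using (((hasDerivAt_id x).sub_const a₀).const_mul (t : ℂ)).const_add a₀
    have h2 : HasDerivAt (fun z : ℂ => f (a₀ + (t : ℂ) * (z - a₀)))
        (deriv f (a₀ + (t : ℂ) * (x - a₀)) * (t : ℂ)) x :=
      (hf _).hasDerivAt.comp x hi
    have hm : HasDerivAt (fun z => (z - a₀) * f (a₀ + (t : ℂ) * (z - a₀))) _ x := h1.mul h2
    convert hm using 1
    simp only [hF'def, one_mul]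
    ring
  have main := (intervalIntegral.hasDerivAt_integral_of_dominated_loc_of_deriv_le
      (F := fun z t => (z - a₀) * f (a₀ + (t : ℂ) * (z - a₀))) (F' := F')
      (bound := fun _ => C₁ + (‖z₀ - a₀‖ + 1) * C₂) (μ := volume) (ball_mem_nhds z₀ one_pos)
      (Filter.Eventually.of_forall fun x =>
        ((continuous_const.mul (hcf.comp (aux_line_cont a₀ x))).aestronglyMeasurable))
      ((continuous_const.mul (hcf.comp (aux_line_cont a₀ z₀))).intervalIntegrable 0 1)
      (((hcf.comp (aux_line_cont a₀ z₀)).add (continuous_const.mul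
        ((Complex.continuous_ofReal.mul
          (hcf'.comp (aux_line_cont a₀ z₀)))))).aestronglyMeasurable)
      ?_ (intervalIntegrable_const) (Filter.Eventually.of_forall hdiff)).2
  · have hval : (∫ t in (0:ℝ)..1, F' z₀ t) = f z₀ := by
      have hφ : ∀ t ∈ Set.uIcc (0:ℝ) 1,
          HasDerivAt (fun s : ℝ => (s : ℂ) * f (a₀ + (s : ℂ) * (z₀ - a₀))) (F' z₀ t) t := by
        intro t _
        have hof : HasDerivAt (fun s : ℝ => (s : ℂ)) 1 t := by
          simpa using (hasDerivAt_id t).ofReal_comp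
        have hiC : HasDerivAt (fun z : ℂ => a₀ + z * (z₀ - a₀)) (z₀ - a₀) ((t : ℝ) : ℂ) := by
          simpa using ((hasDerivAt_id ((t : ℝ) : ℂ)).mul_const (z₀ - a₀)).const_add a₀
        have hH : HasDerivAt (fun z : ℂ => f (a₀ + z * (z₀ - a₀)))
            (deriv f (a₀ + (t : ℂ) * (z₀ - a₀)) * (z₀ - a₀)) ((t : ℝ) : ℂ) :=
          (hf _).hasDerivAt.comp _ hiC
        have hg : HasDerivAt (fun s : ℝ => f (a₀ + (s : ℂ) * (z₀ - a₀)))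
            (deriv f (a₀ + (t : ℂ) * (z₀ - a₀)) * (z₀ - a₀)) t := hH.comp_ofReal
        have hm : HasDerivAt (fun s : ℝ => (s : ℂ) * f (a₀ + (s : ℂ) * (z₀ - a₀))) _ t :=
          hof.mul hg
        convert hm using 1
        simp only [hF'def, one_mul]
        ring
      have hint : IntervalIntegrable (F' z₀) volume 0 1 :=
        ((hcf.comp (aux_line_cont a₀ z₀)).add (continuous_const.mul
          ((Complex.continuous_ofReal.mul
            (hcf'.comp (aux_line_cont a₀ z₀)))))).intervalIntegrable 0 1
      rw [intervalIntegral.integral_eq_sub_of_hasDerivAt hφ hint]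
      simp
    rw [hval] at main
    exact main
  · refine Filter.Eventually.of_forall fun t ht x hx => ?_
    have hmem := hmemK t ht x hx
    have ht1 : |t| ≤ 1 := by
      rw [Set.uIoc_of_le zero_le_one] at ht
      rw [abs_le]; constructor <;> [linarith [ht.1]; exact ht.2]
    have hxz : ‖x - a₀‖ ≤ ‖z₀ - a₀‖ + 1 := by
      have h' : ‖x - a₀‖ ≤ ‖x - z₀‖ + ‖z₀ - a₀‖ := by
        simpa using norm_add_le (x - z₀) (z₀ - a₀)
      have h'' := (mem_ball_iff_norm.1 hx).le
      linarith
    calc ‖F' x t‖ ≤ ‖f (a₀ + (t : ℂ) * (x - a₀))‖ +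
          ‖x - a₀‖ * (|t| * ‖deriv f (a₀ + (t : ℂ) * (x - a₀))‖) := by
          refine le_trans (norm_add_le _ _) ?_
          rw [norm_mul, norm_mul, Complex.norm_real, Real.norm_eq_abs]
      _ ≤ C₁ + (‖z₀ - a₀‖ + 1) * (1 * C₂) := by
          gcongr
          · exact hC₁ _ hmem
          · exact hC₂ _ hmem
      _ = C₁ + (‖z₀ - a₀‖ + 1) * C₂ := by ring

lemma lineIntegral_eq_sub {f : ℂ → ℂ} (hf : Differentiable ℂ f) (a₀ c d : ℂ) :
    lineIntegral c d f = lineIntegral a₀ d f - lineIntegral a₀ c f := by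
  have hF : ∀ z, HasDerivAt (fun z => lineIntegral a₀ z f) (f z) z :=
    fun z => hasDerivAt_lineIntegral hf a₀ z
  have hd : ∀ t ∈ Set.uIcc (0:ℝ) 1,
      HasDerivAt (fun s : ℝ => lineIntegral a₀ (c + (s : ℂ) * (d - c)) f)
        ((d - c) * f (c + (t : ℂ) * (d - c))) t := by
    intro t _
    have hiC : HasDerivAt (fun z : ℂ => c + z * (d - c)) (d - c) ((t : ℝ) : ℂ) := by
      simpa using ((hasDerivAt_id ((t : ℝ) : ℂ)).mul_const (d - c)).const_add c
    have hH : HasDerivAt (fun z : ℂ => lineIntegral a₀ (c + z * (d - c)) f)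
        (f (c + (t : ℂ) * (d - c)) * (d - c)) ((t : ℝ) : ℂ) :=
      (hF _).comp _ hiC
    have hm := hH.comp_ofReal
    convert hm using 1
    ring
  have hint : IntervalIntegrable (fun t : ℝ => (d - c) * f (c + (t : ℂ) * (d - c))) volume 0 1 :=
    (continuous_const.mul (hf.continuous.comp (aux_line_cont c d))).intervalIntegrable 0 1
  have heq := intervalIntegral.integral_eq_sub_of_hasDerivAt hd hint
  rw [lineIntegral, heq]
  simp

lemma split_integral (a b Fa : ℂ) (g u v : ℂ → ℂ) (hg : Continuous g) (hu : Continuous u)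
    (hv : Continuous v) :
    (∫ t in (0:ℝ)..1, (b - a) * (g (a + (t:ℂ)*(b-a)) *
        (u (a + (t:ℂ)*(b-a)) - Fa * v (a + (t:ℂ)*(b-a))))) =
    (∫ t in (0:ℝ)..1, (b - a) * (g (a+(t:ℂ)*(b-a)) * u (a+(t:ℂ)*(b-a)))) -
      Fa * ∫ t in (0:ℝ)..1, (b - a) * (g (a+(t:ℂ)*(b-a)) * v (a+(t:ℂ)*(b-a))) := by
  have h1 : IntervalIntegrable
      (fun t : ℝ => (b-a) * (g (a+(t:ℂ)*(b-a)) * u (a+(t:ℂ)*(b-a)))) volume 0 1 :=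
    (continuous_const.mul ((hg.comp (aux_line_cont a b)).mul
      (hu.comp (aux_line_cont a b)))).intervalIntegrable 0 1
  have h2 : IntervalIntegrable
      (fun t : ℝ => Fa * ((b-a) * (g (a+(t:ℂ)*(b-a)) * v (a+(t:ℂ)*(b-a))))) volume 0 1 :=
    (continuous_const.mul (continuous_const.mul ((hg.comp (aux_line_cont a b)).mul
      (hv.comp (aux_line_cont a b))))).intervalIntegrable 0 1
  calc (∫ t in (0:ℝ)..1, (b - a) * (g (a + (t:ℂ)*(b-a)) *
        (u (a + (t:ℂ)*(b-a)) - Fa * v (a + (t:ℂ)*(b-a)))))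
      = ∫ t in (0:ℝ)..1, ((b-a) * (g (a+(t:ℂ)*(b-a)) * u (a+(t:ℂ)*(b-a))) -
          Fa * ((b-a) * (g (a+(t:ℂ)*(b-a)) * v (a+(t:ℂ)*(b-a))))) := by
        apply intervalIntegral.integral_congr
        intro t _
        ring
    _ = _ := by
        rw [intervalIntegral.integral_sub h1 h2,
          intervalIntegral.integral_const_mul Fa
            (fun t : ℝ => (b-a) * (g (a+(t:ℂ)*(b-a)) * v (a+(t:ℂ)*(b-a))))]

lemma key_lemma {f₁ f₂ : ℂ → ℂ} (hf₁ : Differentiable ℂ f₁) (hf₂ : Continuous f₂)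
    (a₀ a : ℂ) :
    ∀ L : List (ℂ → ℂ), (∀ f ∈ L, Continuous f) → ∀ b : ℂ,
    iterCAux a (L ++ [f₂, f₁]) b =
      iterCAux a (L ++ [fun z => lineIntegral a₀ z f₁ * f₂ z]) b -
        lineIntegral a₀ a f₁ * iterCAux a (L ++ [f₂]) b := by
  have hFd : Differentiable ℂ fun z => lineIntegral a₀ z f₁ :=
    fun z => (hasDerivAt_lineIntegral hf₁ a₀ z).differentiableAt
  have hFc : Continuous fun z => lineIntegral a₀ z f₁ := hFd.continuous
  intro L
  induction L with
  | nil =>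
    intro _ b
    simp only [List.nil_append]
    have h1 : ∀ z : ℂ, iterCAux a [f₁] z =
        lineIntegral a₀ z f₁ - lineIntegral a₀ a f₁ := by
      intro z
      have h0 : iterCAux a [f₁] z = lineIntegral a z f₁ := by
        simp [iterCAux, lineIntegral]
      rw [h0, lineIntegral_eq_sub hf₁ a₀ a z]
    have hLHS : iterCAux a [f₂, f₁] b =
        ∫ t in (0:ℝ)..1, (b - a) * (f₂ (a + (t:ℂ)*(b-a)) *
          ((fun z => lineIntegral a₀ z f₁) (a + (t:ℂ)*(b-a)) -
            lineIntegral a₀ a f₁ * (fun _ : ℂ => (1:ℂ)) (a + (t:ℂ)*(b-a)))) := by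
      show (∫ t in (0:ℝ)..1, (b - a) * (f₂ (a + (t:ℂ)*(b-a)) *
          iterCAux a [f₁] (a + (t:ℂ)*(b-a)))) = _
      apply intervalIntegral.integral_congr
      intro t _
      beta_reduce
      rw [h1]
      ring
    rw [hLHS, split_integral a b (lineIntegral a₀ a f₁) f₂ (fun z => lineIntegral a₀ z f₁)
      (fun _ => (1:ℂ)) hf₂ hFc continuous_const]
    congr 1
    · show _ = iterCAux a [fun z => lineIntegral a₀ z f₁ * f₂ z] b
      show _ = (∫ t in (0:ℝ)..1, (b - a) * ((lineIntegral a₀ (a + (t:ℂ)*(b-a)) f₁ *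
          f₂ (a + (t:ℂ)*(b-a))) * iterCAux a [] (a + (t:ℂ)*(b-a))))
      apply intervalIntegral.integral_congr
      intro t _
      simp only [iterCAux]
      ring
  | cons g L ih =>
    intro hL b
    have hg : Continuous g := hL g (by simp)
    have hL' : ∀ f ∈ L, Continuous f := fun f hf => hL f (by simp [hf])
    have ihz := ih hL'
    have hu : Continuous (iterCAux a (L ++ [fun z => lineIntegral a₀ z f₁ * f₂ z])) := by
      apply iterCAux_continuous
      intro f hf
      rcases List.mem_append.1 hf with h | h
      · exact hL' f h
      · simp at h; subst h; exact hFc.mul hf₂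
    have hv : Continuous (iterCAux a (L ++ [f₂])) := by
      apply iterCAux_continuous
      intro f hf
      rcases List.mem_append.1 hf with h | h
      · exact hL' f h
      · simp at h; subst h; exact hf₂
    simp only [List.cons_append]
    show (∫ t in (0:ℝ)..1, (b - a) * (g (a + (t:ℂ)*(b-a)) *
        iterCAux a (L ++ [f₂, f₁]) (a + (t:ℂ)*(b-a)))) = _
    have hLHS : (∫ t in (0:ℝ)..1, (b - a) * (g (a + (t:ℂ)*(b-a)) *
        iterCAux a (L ++ [f₂, f₁]) (a + (t:ℂ)*(b-a)))) =
        ∫ t in (0:ℝ)..1, (b - a) * (g (a + (t:ℂ)*(b-a)) *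
          (iterCAux a (L ++ [fun z => lineIntegral a₀ z f₁ * f₂ z]) (a + (t:ℂ)*(b-a)) -
            lineIntegral a₀ a f₁ * iterCAux a (L ++ [f₂]) (a + (t:ℂ)*(b-a)))) := by
      apply intervalIntegral.integral_congr
      intro t _
      beta_reduce
      rw [ihz]
    rw [hLHS, split_integral a b (lineIntegral a₀ a f₁) g _ _ hg hu hv]
    rfl

theorem stmt_3 (f₁ f₂ : ℂ → ℂ) (rest : List (ℂ → ℂ))
    (hf₁ : Differentiable ℂ f₁) (hf₂ : Differentiable ℂ f₂)
    (hrest : ∀ f ∈ rest, Differentiable ℂ f) (a₀ a b : ℂ) :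
    iterC a b (f₁ :: f₂ :: rest) =
      iterC a b ((fun z => lineIntegral a₀ z f₁ * f₂ z) :: rest) -
        lineIntegral a₀ a f₁ * iterC a b (f₂ :: rest) := by
  have hL : ∀ f ∈ rest.reverse, Continuous f := by
    intro f hf
    exact (hrest f (List.mem_reverse.1 hf)).continuous
  have h := key_lemma hf₁ hf₂.continuous a₀ a rest.reverse hL b
  simp only [iterC, List.reverse_cons, List.append_assoc, List.singleton_append,
    List.cons_append, List.nil_append] at *
  exact h
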